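/- For every ρ with −1 < ρ ≤ (π−2)/(π+2), set c = √((1+ρ)/(1−ρ)) (so that 0 < c ≤ √(π/2)). Then u = 0 is the unique real solution of the equation 1 − 2·Φ(c·u) + u = 0. -/

import Mathlib

open ProbabilityTheory Real Set MeasureTheory

lemma stdNorm_pdf_eq (t : ℝ) :
    gaussianPDFReal 0 1 t = (Real.sqrt (2 * π))⁻¹ * Real.exp (- t ^ 2 / 2) := by
  simp [gaussianPDFReal]

lemma stdNorm_pdf_even (t : ℝ) : gaussianPDFReal 0 1 (-t) = gaussianPDFReal 0 1 t := by
  rw [stdNorm_pdf_eq, stdNorm_pdf_eq]; ring_nf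

lemma stdNorm_pdf_cont : Continuous (gaussianPDFReal 0 1) := by
  simp only [gaussianPDFReal_def]
  fun_prop

/-- The cumulative distribution function of the standard normal distribution `N(0,1)`. -/
noncomputable def stdNormCDF : ℝ → ℝ := fun x => ProbabilityTheory.cdf (gaussianReal 0 1) x

lemma stdNormCDF_eq (x : ℝ) : stdNormCDF x = ∫ t in Iic x, gaussianPDFReal 0 1 t := by
  rw [stdNormCDF, cdf_eq_real, measureReal_def, gaussianReal_apply_eq_integral 0 one_ne_zero,
    ENNReal.toReal_ofReal (integral_nonneg fun t => gaussianPDFReal_nonneg 0 1 t)]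

lemma stdNormCDF_neg (x : ℝ) : stdNormCDF (-x) = 1 - stdNormCDF x := by
  have h1 : stdNormCDF (-x) = ∫ t in Ioi x, gaussianPDFReal 0 1 t := by
    rw [stdNormCDF_eq]
    rw [show (∫ t in Iic (-x), gaussianPDFReal 0 1 t)
        = ∫ t in Iic (-x), gaussianPDFReal 0 1 (-t) from
      setIntegral_congr_fun measurableSet_Iic fun t _ => (stdNorm_pdf_even t).symm]
    rw [integral_comp_neg_Iic, neg_neg]
  have h2 : (∫ t in Iic x, gaussianPDFReal 0 1 t) + ∫ t in Ioi x, gaussianPDFReal 0 1 t = 1 := by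
    have := MeasureTheory.integral_add_compl (measurableSet_Iic (a := x))
      (integrable_gaussianPDFReal 0 1)
    rw [compl_Iic] at this
    rw [this, integral_gaussianPDFReal_eq_one 0 one_ne_zero]
  rw [h1, stdNormCDF_eq]
  linarith

lemma stdNormCDF_zero : stdNormCDF 0 = 1 / 2 := by
  have := stdNormCDF_neg 0
  rw [neg_zero] at this
  linarith

lemma stdNormCDF_lt (a : ℝ) (ha : 0 < a) :
    stdNormCDF a < 1 / 2 + a / Real.sqrt (2 * π) := by
  have hs : (0:ℝ) < Real.sqrt (2 * π) := Real.sqrt_pos.2 (by positivity)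
  have hdiff : stdNormCDF a - stdNormCDF 0 = ∫ t in (0:ℝ)..a, gaussianPDFReal 0 1 t := by
    rw [stdNormCDF_eq, stdNormCDF_eq,
      ← intervalIntegral.integral_Iic_sub_Iic
        ((integrable_gaussianPDFReal 0 1).integrableOn)
        ((integrable_gaussianPDFReal 0 1).integrableOn)]
  have hbound : (∫ t in (0:ℝ)..a, gaussianPDFReal 0 1 t)
      < ∫ _t in (0:ℝ)..a, (Real.sqrt (2 * π))⁻¹ := by
    apply intervalIntegral.integral_lt_integral_of_continuousOn_of_le_of_exists_lt ha
      (stdNorm_pdf_cont.continuousOn) continuousOn_const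
    · intro t _
      rw [stdNorm_pdf_eq]
      have : Real.exp (- t ^ 2 / 2) ≤ 1 := by
        rw [show (1:ℝ) = Real.exp 0 from (Real.exp_zero).symm]
        exact Real.exp_le_exp.2 (by nlinarith [sq_nonneg t])
      calc (Real.sqrt (2 * π))⁻¹ * Real.exp (- t ^ 2 / 2)
          ≤ (Real.sqrt (2 * π))⁻¹ * 1 := by
            apply mul_le_mul_of_nonneg_left this (by positivity)
        _ = (Real.sqrt (2 * π))⁻¹ := by ring
    · refine ⟨a, ⟨le_of_lt ha, le_refl a⟩, ?_⟩
      rw [stdNorm_pdf_eq]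
      have : Real.exp (- a ^ 2 / 2) < 1 := by
        rw [show (1:ℝ) = Real.exp 0 from (Real.exp_zero).symm]
        exact Real.exp_lt_exp.2 (by nlinarith)
      calc (Real.sqrt (2 * π))⁻¹ * Real.exp (- a ^ 2 / 2)
          < (Real.sqrt (2 * π))⁻¹ * 1 := by
            exact mul_lt_mul_of_pos_left this (by positivity)
        _ = (Real.sqrt (2 * π))⁻¹ := by ring
  rw [intervalIntegral.integral_const, smul_eq_mul, sub_zero] at hbound
  have := stdNormCDF_zero
  rw [div_eq_mul_inv a]
  linarith

/-- For `−1 < ρ ≤ (π−2)/(π+2)` and `c = √((1+ρ)/(1−ρ))` (so that `0 < c ≤ √(π/2)`),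
`u = 0` is the unique real solution of `1 − 2·Φ(c·u) + u = 0`. -/
theorem stmt_3 (ρ : ℝ) (h1 : -1 < ρ) (h2 : ρ ≤ (π - 2) / (π + 2))
    (c : ℝ) (hc : c = Real.sqrt ((1 + ρ) / (1 - ρ))) :
    (0 < c ∧ c ≤ Real.sqrt (π / 2)) ∧
      ∀ u : ℝ, 1 - 2 * stdNormCDF (c * u) + u = 0 ↔ u = 0 := by
  have hπ : 2 < π := by nlinarith [pi_gt_three]
  have hπ2 : (0:ℝ) < π + 2 := by linarith
  have hρ1 : ρ < 1 := lt_of_le_of_lt h2 (by rw [div_lt_one hπ2]; linarith)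
  have hnum : (0:ℝ) < 1 + ρ := by linarith
  have hden : (0:ℝ) < 1 - ρ := by linarith
  have hρπ : ρ * (π + 2) ≤ π - 2 := (le_div_iff₀ hπ2).1 h2
  have hcpos : 0 < c := by rw [hc]; exact Real.sqrt_pos.2 (by positivity)
  have hcle : c ≤ Real.sqrt (π / 2) := by
    rw [hc]
    apply Real.sqrt_le_sqrt
    rw [div_le_div_iff₀ hden (by norm_num : (0:ℝ) < 2)]
    nlinarith
  have hs2π : (0:ℝ) < Real.sqrt (2 * π) := Real.sqrt_pos.2 (by positivity)
  have hhalf : Real.sqrt (π / 2) = Real.sqrt (2 * π) / 2 := by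
    rw [show Real.sqrt (2 * π) / 2 = Real.sqrt (2 * π) * Real.sqrt (1 / 4) by
        rw [show (1/4:ℝ) = (1/2)^2 by norm_num, Real.sqrt_sq (by norm_num : (0:ℝ) ≤ 1/2)]
        ring,
      ← Real.sqrt_mul (by positivity)]
    congr 1
    ring
  refine ⟨⟨hcpos, hcle⟩, fun u => ⟨fun hu => ?_, fun hu => ?_⟩⟩
  · by_contra hne
    have key : ∀ v : ℝ, 0 < v → stdNormCDF (c * v) < 1 / 2 + v / 2 := by
      intro v hv
      have hcv : 0 < c * v := mul_pos hcpos hv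
      have := stdNormCDF_lt (c * v) hcv
      have hle : c * v / Real.sqrt (2 * π) ≤ v / 2 := by
        rw [div_le_div_iff₀ hs2π (by norm_num : (0:ℝ) < 2)]
        have : c ≤ Real.sqrt (2 * π) / 2 := by rw [← hhalf]; exact hcle
        nlinarith
      linarith
    rcases lt_trichotomy u 0 with hlt | heq | hgt
    · have hcu : stdNormCDF (c * u) = 1 - stdNormCDF (c * (-u)) := by
        rw [show c * u = -(c * (-u)) by ring, stdNormCDF_neg]
      have := key (-u) (by linarith)
      rw [hcu] at hu
      linarith
    · exact hne heq
    · have := key u hgt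
      linarith
  · rw [hu, mul_zero, stdNormCDF_zero]; ring
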